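/- Lundberg's inequality: let μ be a Borel probability measure on [0, ∞), and let λ > 0, c > 0 and κ > 0 satisfy ∫_{[0,∞)} e^{κx} dμ(x) < ∞ and λ·∫_{[0,∞)} e^{κx} dμ(x) = λ + κc. Define the sequence of functions ψₙ : [0, ∞) → ℝ by ψ₀ = 0 and ψₙ₊₁(u) = ∫_0^∞ ( μ((u + ct, ∞)) + ∫_{[0, u+ct]} ψₙ(u + ct − x) dμ(x) )·λ·e^{−λt} dt. Then for every n ≥ 0 and every u ≥ 0 one has 0 ≤ ψₙ(u) ≤ e^{−κu}; consequently, if for some function ψ : [0, ∞) → ℝ the pointwise limit ψ(u) = limₙ ψₙ(u) exists for all u ≥ 0, then the ruin probability satisfies ψ(u) ≤ e^{−κu} for all u ≥ 0, and in particular ψ(u) → 0 as u → ∞. -/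

import Mathlib

open MeasureTheory Set Filter

/-- Lundberg's inequality: the ruin probabilities `ψₙ` of the Cramér–Lundberg model satisfy
`0 ≤ ψₙ(u) ≤ e^{-κu}`, hence any pointwise limit `ψ` satisfies `ψ(u) ≤ e^{-κu}` and
`ψ(u) → 0` as `u → ∞`. -/
theorem lundberg_inequality (μ : Measure ℝ) [IsProbabilityMeasure μ]
    (hsupp : μ (Iio 0) = 0) (lam c κ : ℝ) (hlam : 0 < lam) (hc : 0 < c) (hκ : 0 < κ)
    (hInt : IntegrableOn (fun x => Real.exp (κ * x)) (Ici 0) μ)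
    (hAdj : lam * ∫ x in Ici 0, Real.exp (κ * x) ∂μ = lam + κ * c)
    (ψ : ℕ → ℝ → ℝ) (hψ0 : ∀ u, ψ 0 u = 0)
    (hψrec : ∀ n : ℕ, ∀ u : ℝ,
      ψ (n + 1) u = ∫ t in Ioi (0 : ℝ),
        ((μ (Ioi (u + c * t))).toReal + ∫ x in Icc 0 (u + c * t), ψ n (u + c * t - x) ∂μ)
          * (lam * Real.exp (-lam * t))) :
    (∀ n : ℕ, ∀ u : ℝ, 0 ≤ u → 0 ≤ ψ n u ∧ ψ n u ≤ Real.exp (-κ * u)) ∧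
    (∀ ψlim : ℝ → ℝ, (∀ u : ℝ, 0 ≤ u → Tendsto (fun n => ψ n u) atTop (nhds (ψlim u))) →
      (∀ u : ℝ, 0 ≤ u → ψlim u ≤ Real.exp (-κ * u)) ∧ Tendsto ψlim atTop (nhds 0)) := by
  set M := ∫ x in Ici 0, Real.exp (κ * x) ∂μ with hM
  have hMpos : 0 < M := by
    have : 0 < lam * M := by rw [hAdj]; positivity
    nlinarith
  have hb : 0 < κ * c + lam := by positivity
  have hMain : ∀ n : ℕ, ∀ u : ℝ, 0 ≤ u → 0 ≤ ψ n u ∧ ψ n u ≤ Real.exp (-κ * u) := by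
    intro n
    induction n with
    | zero =>
      intro u hu
      simp [hψ0, (Real.exp_pos _).le]
    | succ n ih =>
      intro u hu
      -- key pointwise bound on the inner quantity
      have key : ∀ s : ℝ, 0 ≤ s →
          (μ (Ioi s)).toReal + (∫ x in Icc 0 s, ψ n (s - x) ∂μ) ≤ Real.exp (-κ * s) * M := by
        intro s hs
        have hsub1 : Ioi s ⊆ Ici (0 : ℝ) := fun x hx => le_of_lt (lt_of_le_of_lt hs hx)
        have hsub2 : Icc (0 : ℝ) s ⊆ Ici (0 : ℝ) := fun x hx => hx.1
        have hI1 : IntegrableOn (fun x => Real.exp (κ * x)) (Ioi s) μ :=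
          hInt.mono_set hsub1
        have hI2 : IntegrableOn (fun x => Real.exp (κ * x)) (Icc 0 s) μ :=
          hInt.mono_set hsub2
        -- bound the tail measure
        have t1 : (μ (Ioi s)).toReal ≤
            Real.exp (-κ * s) * ∫ x in Ioi s, Real.exp (κ * x) ∂μ := by
          have h1 : (μ (Ioi s)).toReal = ∫ _x in Ioi s, (1 : ℝ) ∂μ := by
            simp [setIntegral_const, measureReal_def]
          rw [h1, ← MeasureTheory.integral_const_mul]
          refine setIntegral_mono_on (integrableOn_const (measure_lt_top μ _).ne)
            (hI1.const_mul _) measurableSet_Ioi ?_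
          intro x hx
          rw [← Real.exp_add]
          refine Real.one_le_exp ?_
          have : s < x := hx
          nlinarith
        -- bound the inner integral
        have t2 : (∫ x in Icc 0 s, ψ n (s - x) ∂μ) ≤
            Real.exp (-κ * s) * ∫ x in Icc 0 s, Real.exp (κ * x) ∂μ := by
          rw [← MeasureTheory.integral_const_mul]
          refine integral_mono_of_nonneg ?_ (hI2.const_mul _) ?_
          · refine (ae_restrict_iff' measurableSet_Icc).2 (ae_of_all _ fun x hx => ?_)
            exact (ih (s - x) (by linarith [hx.2])).1
          · refine (ae_restrict_iff' measurableSet_Icc).2 (ae_of_all _ fun x hx => ?_)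
            have h2 := (ih (s - x) (by linarith [hx.2])).2
            calc ψ n (s - x) ≤ Real.exp (-κ * (s - x)) := h2
              _ = Real.exp (-κ * s) * Real.exp (κ * x) := by
                  rw [← Real.exp_add]; ring_nf
        -- split the integral over [0,∞)
        have hsplit : M = (∫ x in Icc 0 s, Real.exp (κ * x) ∂μ) +
            ∫ x in Ioi s, Real.exp (κ * x) ∂μ := by
          rw [hM, ← Icc_union_Ioi_eq_Ici hs]
          exact setIntegral_union ((Iic_disjoint_Ioi le_rfl).mono_left Icc_subset_Iic_self) measurableSet_Ioi hI2 hI1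
        rw [hsplit]
        linarith [t1, t2]
      have hg : IntegrableOn
          (fun t => M * lam * Real.exp (-κ * u) * Real.exp (-(κ * c + lam) * t))
          (Ioi 0) volume := by
        exact (exp_neg_integrableOn_Ioi 0 hb).const_mul _
      have hfg : ∀ t ∈ Ioi (0 : ℝ),
          ((μ (Ioi (u + c * t))).toReal + ∫ x in Icc 0 (u + c * t), ψ n (u + c * t - x) ∂μ)
            * (lam * Real.exp (-lam * t))
          ≤ M * lam * Real.exp (-κ * u) * Real.exp (-(κ * c + lam) * t) := by
        intro t ht
        have ht' : (0 : ℝ) < t := ht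
        have hs : (0 : ℝ) ≤ u + c * t := by nlinarith
        have hk := key (u + c * t) hs
        have hnn : (0 : ℝ) ≤ lam * Real.exp (-lam * t) := by positivity
        calc ((μ (Ioi (u + c * t))).toReal + ∫ x in Icc 0 (u + c * t), ψ n (u + c * t - x) ∂μ)
              * (lam * Real.exp (-lam * t))
            ≤ (Real.exp (-κ * (u + c * t)) * M) * (lam * Real.exp (-lam * t)) :=
              mul_le_mul_of_nonneg_right hk hnn
          _ = M * lam * Real.exp (-κ * u) * Real.exp (-(κ * c + lam) * t) := by
              rw [show (-κ * (u + c * t)) = -κ * u + -(κ * c) * t by ring,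
                show (-(κ * c + lam) * t) = -(κ * c) * t + -lam * t by ring,
                Real.exp_add, Real.exp_add]
              ring
      have hfnn : ∀ t ∈ Ioi (0 : ℝ), (0 : ℝ) ≤
          ((μ (Ioi (u + c * t))).toReal + ∫ x in Icc 0 (u + c * t), ψ n (u + c * t - x) ∂μ)
            * (lam * Real.exp (-lam * t)) := by
        intro t ht
        have ht' : (0 : ℝ) < t := ht
        have h1 : (0 : ℝ) ≤ (μ (Ioi (u + c * t))).toReal := ENNReal.toReal_nonneg
        have h2 : (0 : ℝ) ≤ ∫ x in Icc 0 (u + c * t), ψ n (u + c * t - x) ∂μ := by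
          refine setIntegral_nonneg measurableSet_Icc fun x hx => ?_
          exact (ih (u + c * t - x) (by linarith [hx.2])).1
        positivity
      constructor
      · rw [hψrec]
        exact setIntegral_nonneg measurableSet_Ioi hfnn
      · rw [hψrec]
        have hle : (∫ t in Ioi (0 : ℝ),
            ((μ (Ioi (u + c * t))).toReal + ∫ x in Icc 0 (u + c * t), ψ n (u + c * t - x) ∂μ)
              * (lam * Real.exp (-lam * t)))
            ≤ ∫ t in Ioi (0 : ℝ),
              M * lam * Real.exp (-κ * u) * Real.exp (-(κ * c + lam) * t) := by
          refine integral_mono_of_nonneg ?_ hg ?_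
          · exact (ae_restrict_iff' measurableSet_Ioi).2 (ae_of_all _ hfnn)
          · exact (ae_restrict_iff' measurableSet_Ioi).2 (ae_of_all _ hfg)
        refine hle.trans (le_of_eq ?_)
        have hval : (∫ t in Ioi (0 : ℝ), Real.exp (-(κ * c + lam) * t)) = (κ * c + lam)⁻¹ := by
          have h0 : ∀ t : ℝ, Real.exp (-(κ * c + lam) * t) = Real.exp (-((κ * c + lam) * t)) := by
            intro t; ring_nf
          simp_rw [h0]
          rw [MeasureTheory.integral_comp_mul_left_Ioi (fun x => Real.exp (-x)) 0 hb]
          simp only [mul_zero, smul_eq_mul, integral_exp_neg_Ioi_zero, mul_one]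
        rw [MeasureTheory.integral_const_mul, hval]
        calc M * lam * Real.exp (-κ * u) * (κ * c + lam)⁻¹
            = (lam * M) * (κ * c + lam)⁻¹ * Real.exp (-κ * u) := by ring
          _ = Real.exp (-κ * u) := by
              rw [hAdj, show lam + κ * c = κ * c + lam by ring,
                mul_inv_cancel₀ hb.ne', one_mul]
  refine ⟨hMain, ?_⟩
  intro ψlim hlim
  have hle : ∀ u : ℝ, 0 ≤ u → ψlim u ≤ Real.exp (-κ * u) := fun u hu =>
    le_of_tendsto (hlim u hu) (Eventually.of_forall fun n => (hMain n u hu).2)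
  have hge : ∀ u : ℝ, 0 ≤ u → 0 ≤ ψlim u := fun u hu =>
    ge_of_tendsto (hlim u hu) (Eventually.of_forall fun n => (hMain n u hu).1)
  refine ⟨hle, ?_⟩
  have hexp : Tendsto (fun u : ℝ => Real.exp (-κ * u)) atTop (nhds 0) := by
    apply Real.tendsto_exp_atBot.comp
    exact Tendsto.const_mul_atTop_of_neg (by linarith) tendsto_id
  refine squeeze_zero' ?_ ?_ hexp
  · filter_upwards [eventually_ge_atTop (0 : ℝ)] with u hu using hge u hu
  · filter_upwards [eventually_ge_atTop (0 : ℝ)] with u hu using hle u hu
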